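/- Let α = ({D_g}_{g∈G}, {α_g}_{g∈G}) be a partial action of a groupoid G on a ring R such that every D_g, g ∈ G, is a unital ring. Then a globalization of α is unique up to equivalence: if β = ({E_g}, {β_g}) acting on T (with monomorphisms φ_e) and β' = ({E'_g}, {β'_g}) acting on T' (with monomorphisms φ'_e) are both globalizations of α, then for each e ∈ G₀ there exists a ring isomorphism ψ_e : E'_e → E_e such that β_g(ψ_{d(g)}(a)) = ψ_{r(g)}(β'_g(a)) for all g ∈ G and all a ∈ E'_{d(g)}. -/

import Mathlib

universe u

/-- A groupoid in the algebraic sense of Lawson: a non-empty set `G` with a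
partially defined binary operation (here modeled by a total operation `mul`
whose value is only constrained when it is defined, i.e. when `d g = r h`),
an inversion `inv`, and domain/range maps `d`, `r`. -/
structure AlgGroupoid (G : Type u) where
  mul : G → G → G
  inv : G → G
  d : G → G
  r : G → G
  mul_assoc' : ∀ g h l, d g = r h → d h = r l → mul (mul g h) l = mul g (mul h l)
  mul_d : ∀ g, mul g (d g) = g
  r_mul : ∀ g, mul (r g) g = g
  inv_mul : ∀ g, mul (inv g) g = d g
  mul_inv : ∀ g, mul g (inv g) = r g
  d_mul : ∀ g h, d g = r h → d (mul g h) = d h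
  r_mul' : ∀ g h, d g = r h → r (mul g h) = r g
  d_inv : ∀ g, d (inv g) = r g
  r_inv : ∀ g, r (inv g) = d g
  inv_inv : ∀ g, inv (inv g) = g
  d_d : ∀ g, d (d g) = d g
  r_d : ∀ g, r (d g) = d g
  d_r : ∀ g, d (r g) = r g
  r_r : ∀ g, r (r g) = r g

/-- `e` is an identity element of the groupoid `𝔾`, i.e. an element of `G₀`. -/
def AlgGroupoid.isId {G : Type u} (𝔾 : AlgGroupoid G) (e : G) : Prop := 𝔾.d e = e

instance {G : Type u} [DecidableEq G] (𝔾 : AlgGroupoid G) (e : G) : Decidable (𝔾.isId e) :=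
  inferInstanceAs (Decidable (𝔾.d e = e))

/-- `D` is a two-sided ideal of `E` (both being subsets of an ambient
non-unital ring `T`). -/
structure IsIdealIn {T : Type u} [NonUnitalRing T] (D E : Set T) : Prop where
  subset : D ⊆ E
  zero_mem : (0 : T) ∈ D
  add_mem : ∀ ⦃x y : T⦄, x ∈ D → y ∈ D → x + y ∈ D
  neg_mem : ∀ ⦃x : T⦄, x ∈ D → -x ∈ D
  mul_mem_left : ∀ ⦃x y : T⦄, x ∈ E → y ∈ D → x * y ∈ D
  mul_mem_right : ∀ ⦃x y : T⦄, x ∈ D → y ∈ E → x * y ∈ D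

/-- `u` is a (two-sided) multiplicative identity element of the subset `D`. -/
def IsIdentityElem {T : Type u} [NonUnitalRing T] (u : T) (D : Set T) : Prop :=
  u ∈ D ∧ ∀ x ∈ D, u * x = x ∧ x * u = x

/-- A partial action `α = ({D_g}, {α_g})` of a groupoid `𝔾` on the ring whose
carrier is the subset `R` of the ambient non-unital ring `T` (take
`R = Set.univ` for a partial action on `T` itself).  For each `g`, `D (r g)`
is an ideal of `R`, `D g` is an ideal of `D (r g)` and `act g` restricts to a
ring isomorphism from `D (inv g)` onto `D g`; moreover `act e` is the identity
of `D e` for identities `e`, and for composable `g, h` the map `act (mul g h)`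
extends `act g ∘ act h` (whose domain is `(act h)⁻¹ (D (inv g) ∩ D h)`). -/
structure PartialGroupoidAction {G : Type u} (𝔾 : AlgGroupoid G) (T : Type u)
    [NonUnitalRing T] (R : Set T) where
  D : G → Set T
  act : G → T → T
  ideal_r : ∀ g, IsIdealIn (D (𝔾.r g)) R
  ideal : ∀ g, IsIdealIn (D g) (D (𝔾.r g))
  bijOn : ∀ g, Set.BijOn (act g) (D (𝔾.inv g)) (D g)
  map_add : ∀ g, ∀ x ∈ D (𝔾.inv g), ∀ y ∈ D (𝔾.inv g), act g (x + y) = act g x + act g y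
  map_mul : ∀ g, ∀ x ∈ D (𝔾.inv g), ∀ y ∈ D (𝔾.inv g), act g (x * y) = act g x * act g y
  act_id : ∀ e, 𝔾.isId e → ∀ x ∈ D e, act e x = x
  dom_cond : ∀ g h, 𝔾.d g = 𝔾.r h → ∀ x ∈ D (𝔾.inv h), act h x ∈ D (𝔾.inv g) →
    x ∈ D (𝔾.inv (𝔾.mul g h))
  comp_cond : ∀ g h, 𝔾.d g = 𝔾.r h → ∀ x ∈ D (𝔾.inv h), act h x ∈ D (𝔾.inv g) →
    act g (act h x) = act (𝔾.mul g h) x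

/-- The partial action `α` is global if, for all composable `g, h`, the
composite `α_g ∘ α_h` (taken on its largest possible domain) coincides with
`α_{gh}`; since both maps always agree on the domain of the composite, this
amounts to the equality of the two domains. -/
def PartialGroupoidAction.IsGlobal {G : Type u} {𝔾 : AlgGroupoid G} {T : Type u}
    [NonUnitalRing T] {R : Set T} (α : PartialGroupoidAction 𝔾 T R) : Prop :=
  ∀ g h, 𝔾.d g = 𝔾.r h →
    {x | x ∈ α.D (𝔾.inv h) ∧ α.act h x ∈ α.D (𝔾.inv g)} = α.D (𝔾.inv (𝔾.mul g h))

/-- The global action `β` of `𝔾` on `T` is a globalization (enveloping action)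
of the partial action `α` of `𝔾` on `R`, witnessed by the family of ring
monomorphisms `φ e : D_e → E_e` (`e` an identity of `𝔾`), where `E_g = β.D g`. -/
structure Globalization {G : Type u} (𝔾 : AlgGroupoid G) {R : Type u} [NonUnitalRing R]
    (α : PartialGroupoidAction 𝔾 R (Set.univ : Set R)) {T : Type u} [NonUnitalRing T]
    (β : PartialGroupoidAction 𝔾 T (Set.univ : Set T)) where
  global : β.IsGlobal
  φ : G → R → T
  φ_injOn : ∀ e, 𝔾.isId e → Set.InjOn (φ e) (α.D e)
  φ_add : ∀ e, 𝔾.isId e → ∀ x ∈ α.D e, ∀ y ∈ α.D e, φ e (x + y) = φ e x + φ e y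
  φ_mul : ∀ e, 𝔾.isId e → ∀ x ∈ α.D e, ∀ y ∈ α.D e, φ e (x * y) = φ e x * φ e y
  φ_mem : ∀ e, 𝔾.isId e → ∀ x ∈ α.D e, φ e x ∈ β.D e
  φ_ideal : ∀ e, 𝔾.isId e → IsIdealIn (φ e '' α.D e) (β.D e)
  compat_D : ∀ g, φ (𝔾.r g) '' α.D g
      = (φ (𝔾.r g) '' α.D (𝔾.r g)) ∩ (β.act g '' (φ (𝔾.d g) '' α.D (𝔾.d g)))
  compat_act : ∀ g, ∀ a ∈ α.D (𝔾.inv g), β.act g (φ (𝔾.d g) a) = φ (𝔾.r g) (α.act g a)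
  spans : ∀ g, β.D g
      = ↑(AddSubgroup.closure
          (⋃ h ∈ {h : G | 𝔾.r h = 𝔾.r g}, β.act h '' (φ (𝔾.d h) '' α.D (𝔾.d h))))

/-- Bundled form: some ring `T` together with a global action of `𝔾` on it
which is a globalization of `α`. -/
structure GlobalizationOf {G : Type u} (𝔾 : AlgGroupoid G) {R : Type u} [NonUnitalRing R]
    (α : PartialGroupoidAction 𝔾 R (Set.univ : Set R)) : Type (u + 1) where
  T : Type u
  [ringT : NonUnitalRing T]
  β : PartialGroupoidAction 𝔾 T (Set.univ : Set T)
  glob : Globalization 𝔾 α β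

/-! ### Auxiliary development for the uniqueness theorem -/

namespace GU

variable {G : Type u}

/-! #### Groupoid lemmas -/

section Grpd
variable (𝔾 : AlgGroupoid G)

lemma isId_d (g : G) : 𝔾.isId (𝔾.d g) := 𝔾.d_d g

lemma isId_r (g : G) : 𝔾.isId (𝔾.r g) := 𝔾.d_r g

lemma r_of_isId {e : G} (he : 𝔾.isId e) : 𝔾.r e = e := by
  have h := 𝔾.r_d e
  rwa [he] at h

lemma inv_of_isId {e : G} (he : 𝔾.isId e) : 𝔾.inv e = e := by
  have h1 : 𝔾.d (𝔾.inv e) = e := by rw [𝔾.d_inv, r_of_isId 𝔾 he]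
  have h2 := 𝔾.mul_d (𝔾.inv e)
  rw [h1] at h2
  have h3 := 𝔾.inv_mul e
  rw [h2] at h3
  rw [h3]; exact he

lemma comp_inv (l h : G) (hc : 𝔾.r l = 𝔾.r h) : 𝔾.d (𝔾.inv l) = 𝔾.r h := by
  rw [𝔾.d_inv, hc]

lemma mul_inv_mul (l h : G) (hc : 𝔾.r l = 𝔾.r h) :
    𝔾.mul l (𝔾.mul (𝔾.inv l) h) = h := by
  have ha := 𝔾.mul_assoc' l (𝔾.inv l) h (𝔾.r_inv l).symm (comp_inv 𝔾 l h hc)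
  rw [← ha, 𝔾.mul_inv, hc, 𝔾.r_mul]

lemma d_mul_inv_mul (l h : G) (hc : 𝔾.r l = 𝔾.r h) :
    𝔾.d (𝔾.mul (𝔾.inv l) h) = 𝔾.d h := 𝔾.d_mul _ _ (comp_inv 𝔾 l h hc)

lemma r_mul_inv_mul (l h : G) (hc : 𝔾.r l = 𝔾.r h) :
    𝔾.r (𝔾.mul (𝔾.inv l) h) = 𝔾.d l := by
  rw [𝔾.r_mul' _ _ (comp_inv 𝔾 l h hc), 𝔾.r_inv]

end Grpd

/-! #### Generic partial-action lemmas -/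

section PA
variable (𝔾 : AlgGroupoid G) {A : Type u} [NonUnitalRing A] {Rs : Set A}
variable (P : PartialGroupoidAction 𝔾 A Rs)

lemma D_subset (g : G) : P.D g ⊆ P.D (𝔾.r g) := (P.ideal g).subset

lemma D_inv_subset (g : G) : P.D (𝔾.inv g) ⊆ P.D (𝔾.d g) := by
  have h := D_subset 𝔾 P (𝔾.inv g)
  rwa [𝔾.r_inv] at h

lemma zero_mem_D (g : G) : (0 : A) ∈ P.D g := (P.ideal g).zero_mem

lemma add_mem_D {g : G} {x y : A} (hx : x ∈ P.D g) (hy : y ∈ P.D g) : x + y ∈ P.D g :=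
  (P.ideal g).add_mem hx hy

lemma neg_mem_D {g : G} {x : A} (hx : x ∈ P.D g) : -x ∈ P.D g := (P.ideal g).neg_mem hx

lemma sub_mem_D {g : G} {x y : A} (hx : x ∈ P.D g) (hy : y ∈ P.D g) : x - y ∈ P.D g := by
  rw [sub_eq_add_neg]
  exact add_mem_D 𝔾 P hx (neg_mem_D 𝔾 P hy)

lemma sum_mem_D {g : G} (l : List A) (h : ∀ x ∈ l, x ∈ P.D g) : l.sum ∈ P.D g := by
  induction l with
  | nil => simpa using zero_mem_D 𝔾 P g
  | cons a l ih =>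
    rw [List.sum_cons]
    exact add_mem_D 𝔾 P (h a List.mem_cons_self)
      (ih fun x hx => h x (List.mem_cons_of_mem a hx))

lemma act_mem {g : G} {x : A} (hx : x ∈ P.D (𝔾.inv g)) : P.act g x ∈ P.D g :=
  (P.bijOn g).mapsTo hx

lemma act_zero (g : G) : P.act g 0 = 0 := by
  have h0 : (0 : A) ∈ P.D (𝔾.inv g) := zero_mem_D 𝔾 P _
  have h := P.map_add g 0 h0 0 h0
  rw [add_zero] at h
  exact add_eq_left.mp h.symm

lemma act_neg {g : G} {x : A} (hx : x ∈ P.D (𝔾.inv g)) : P.act g (-x) = -(P.act g x) := by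
  have hnx : -x ∈ P.D (𝔾.inv g) := neg_mem_D 𝔾 P hx
  have h := P.map_add g x hx (-x) hnx
  have hx0 : x + -x = 0 := by abel
  rw [hx0, act_zero 𝔾 P g] at h
  exact (neg_eq_of_add_eq_zero_right h.symm).symm

lemma act_inv_mem {g : G} {x : A} (hx : x ∈ P.D g) : P.act (𝔾.inv g) x ∈ P.D (𝔾.inv g) := by
  have h : x ∈ P.D (𝔾.inv (𝔾.inv g)) := by rw [𝔾.inv_inv]; exact hx
  exact (P.bijOn (𝔾.inv g)).mapsTo h

lemma act_act_inv {g : G} {x : A} (hx : x ∈ P.D g) : P.act g (P.act (𝔾.inv g) x) = x := by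
  have hc : 𝔾.d g = 𝔾.r (𝔾.inv g) := (𝔾.r_inv g).symm
  have hmem : x ∈ P.D (𝔾.inv (𝔾.inv g)) := by rw [𝔾.inv_inv]; exact hx
  have h2 := act_inv_mem 𝔾 P hx
  have h := P.comp_cond g (𝔾.inv g) hc x hmem h2
  rw [h, 𝔾.mul_inv]
  exact P.act_id _ (isId_r 𝔾 g) x (D_subset 𝔾 P g hx)

end PA

/-! #### The `cmap` combination (depends only on `α`) -/

section Cmap
variable (𝔾 : AlgGroupoid G) {R : Type u} [NonUnitalRing R]
variable (α : PartialGroupoidAction 𝔾 R (Set.univ : Set R))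
variable (un : G → R)

/-- The element `α_g(a · α_{g⁻¹}(b · u_g))`, which computes
`β_g(φ(a)) · φ(b)` in any globalization. -/
def cmap (g : G) (a b : R) : R :=
  α.act g (a * α.act (𝔾.inv g) (b * un g))

/-- Validity of a list of generator data over the identity `e`. -/
def Valid (e : G) (L : List (G × R)) : Prop :=
  ∀ p ∈ L, 𝔾.r p.1 = e ∧ p.2 ∈ α.D (𝔾.d p.1)

lemma valid_tail {e : G} {p : G × R} {L : List (G × R)} (h : Valid 𝔾 α e (p :: L)) :
    Valid 𝔾 α e L := fun x hx => h x (List.mem_cons_of_mem p hx)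

lemma valid_head {e : G} {p : G × R} {L : List (G × R)} (h : Valid 𝔾 α e (p :: L)) :
    𝔾.r p.1 = e ∧ p.2 ∈ α.D (𝔾.d p.1) := h p List.mem_cons_self

lemma valid_append {e : G} {L M : List (G × R)} (hL : Valid 𝔾 α e L)
    (hM : Valid 𝔾 α e M) : Valid 𝔾 α e (L ++ M) := fun q hq =>
  (List.mem_append.mp hq).elim (hL q) (hM q)

lemma valid_neg {e : G} {L : List (G × R)} (hL : Valid 𝔾 α e L) :
    Valid 𝔾 α e (L.map (fun p => (p.1, -p.2))) := by
  intro q hq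
  simp only [List.mem_map] at hq
  obtain ⟨p, hp, rfl⟩ := hq
  exact ⟨(hL p hp).1, neg_mem_D 𝔾 α (hL p hp).2⟩

variable (hu : ∀ g, IsIdentityElem (un g) (α.D g))

include hu in
lemma cmap_mem {g : G} {a b : R} (ha : a ∈ α.D (𝔾.d g)) (hb : b ∈ α.D (𝔾.r g)) :
    cmap 𝔾 α un g a b ∈ α.D g := by
  have hbu : b * un g ∈ α.D g := (α.ideal g).mul_mem_left hb (hu g).1
  have h1 : α.act (𝔾.inv g) (b * un g) ∈ α.D (𝔾.inv g) := act_inv_mem 𝔾 α hbu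
  have ha' : a ∈ α.D (𝔾.r (𝔾.inv g)) := by rw [𝔾.r_inv]; exact ha
  have hm : a * α.act (𝔾.inv g) (b * un g) ∈ α.D (𝔾.inv g) :=
    (α.ideal (𝔾.inv g)).mul_mem_left ha' h1
  exact act_mem 𝔾 α hm

include hu in
lemma cmap_of_isId {f : G} (hf : 𝔾.isId f) {a : R} (ha : a ∈ α.D f) :
    cmap 𝔾 α un f a (un f) = a := by
  unfold cmap
  rw [inv_of_isId 𝔾 hf]
  have h1 : un f * un f = un f := ((hu f).2 (un f) (hu f).1).1
  rw [h1, α.act_id f hf (un f) (hu f).1, ((hu f).2 a ha).2, α.act_id f hf a ha]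

include hu in
lemma cmap_head {p₁ : G} {a : R} (ha : a ∈ α.D (𝔾.d p₁)) :
    cmap 𝔾 α un (𝔾.mul (𝔾.inv p₁) p₁) a (un (𝔾.d p₁)) = a := by
  rw [𝔾.inv_mul p₁]
  exact cmap_of_isId 𝔾 α un hu (isId_d 𝔾 p₁) ha

include hu in
lemma cmap_list_mem {e : G} (p₁ : G) (hp1 : 𝔾.r p₁ = e) {L : List (G × R)}
    (hL : Valid 𝔾 α e L) :
    ∀ y ∈ L.map (fun q => cmap 𝔾 α un (𝔾.mul (𝔾.inv p₁) q.1) q.2 (un (𝔾.d p₁))),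
      y ∈ α.D (𝔾.d p₁) := by
  intro y hy
  obtain ⟨q, hqL, rfl⟩ := List.mem_map.mp hy
  have hq' := hL q hqL
  have hpq : 𝔾.r p₁ = 𝔾.r q.1 := by rw [hp1, hq'.1]
  have h1 : q.2 ∈ α.D (𝔾.d (𝔾.mul (𝔾.inv p₁) q.1)) := by
    rw [d_mul_inv_mul 𝔾 p₁ q.1 hpq]; exact hq'.2
  have h2 : un (𝔾.d p₁) ∈ α.D (𝔾.r (𝔾.mul (𝔾.inv p₁) q.1)) := by
    rw [r_mul_inv_mul 𝔾 p₁ q.1 hpq]; exact (hu (𝔾.d p₁)).1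
  have h3 := D_subset 𝔾 α (𝔾.mul (𝔾.inv p₁) q.1) (cmap_mem 𝔾 α un hu h1 h2)
  rwa [r_mul_inv_mul 𝔾 p₁ q.1 hpq] at h3

include hu in
lemma valid_prod {e : G} {L M : List (G × R)} (hL : Valid 𝔾 α e L) (hM : Valid 𝔾 α e M) :
    Valid 𝔾 α e (L.flatMap (fun p => M.map
      (fun q => (q.1, cmap 𝔾 α un (𝔾.mul (𝔾.inv q.1) p.1) p.2 q.2)))) := by
  intro x hx
  rw [List.mem_flatMap] at hx
  obtain ⟨p, hp, hx⟩ := hx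
  obtain ⟨q, hq, rfl⟩ := List.mem_map.mp hx
  have hpv := hL p hp
  have hqv := hM q hq
  refine ⟨hqv.1, ?_⟩
  dsimp only
  have hqp : 𝔾.r q.1 = 𝔾.r p.1 := by rw [hpv.1, hqv.1]
  have h1 : p.2 ∈ α.D (𝔾.d (𝔾.mul (𝔾.inv q.1) p.1)) := by
    rw [d_mul_inv_mul 𝔾 q.1 p.1 hqp]; exact hpv.2
  have h2 : q.2 ∈ α.D (𝔾.r (𝔾.mul (𝔾.inv q.1) p.1)) := by
    rw [r_mul_inv_mul 𝔾 q.1 p.1 hqp]; exact hqv.2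
  have h3 := D_subset 𝔾 α _ (cmap_mem 𝔾 α un hu h1 h2)
  rwa [r_mul_inv_mul 𝔾 q.1 p.1 hqp] at h3

end Cmap

/-! #### Lemmas about a single globalization -/

section Glob
variable (𝔾 : AlgGroupoid G) {R : Type u} [NonUnitalRing R]
variable (α : PartialGroupoidAction 𝔾 R (Set.univ : Set R))
variable (un : G → R)
variable {T : Type u} [NonUnitalRing T]
variable (β : PartialGroupoidAction 𝔾 T (Set.univ : Set T)) (hβ : Globalization 𝔾 α β)

include hβ in
lemma D_r_eq (g : G) : β.D g = β.D (𝔾.r g) := by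
  rw [hβ.spans g, hβ.spans (𝔾.r g), 𝔾.r_r]

include hβ in
lemma D_inv_eq (g : G) : β.D (𝔾.inv g) = β.D (𝔾.d g) := by
  rw [D_r_eq 𝔾 α β hβ (𝔾.inv g), 𝔾.r_inv]

lemma phi_zero {e : G} (he : 𝔾.isId e) : hβ.φ e 0 = 0 := by
  have h0 : (0 : R) ∈ α.D e := zero_mem_D 𝔾 α e
  have h := hβ.φ_add e he 0 h0 0 h0
  rw [add_zero] at h
  exact add_eq_left.mp h.symm

lemma phi_neg {e : G} (he : 𝔾.isId e) {x : R} (hx : x ∈ α.D e) :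
    hβ.φ e (-x) = -hβ.φ e x := by
  have hnx : -x ∈ α.D e := neg_mem_D 𝔾 α hx
  have h := hβ.φ_add e he x hx (-x) hnx
  have hx0 : x + -x = 0 := by abel
  rw [hx0, phi_zero 𝔾 α β hβ he] at h
  exact (neg_eq_of_add_eq_zero_right h.symm).symm

lemma phi_eq_zero {e : G} (he : 𝔾.isId e) {x : R} (hx : x ∈ α.D e)
    (h : hβ.φ e x = 0) : x = 0 :=
  hβ.φ_injOn e he hx (zero_mem_D 𝔾 α e) (by rw [h, phi_zero 𝔾 α β hβ he])

lemma phi_mem_dom (h : G) {a : R} (ha : a ∈ α.D (𝔾.d h)) :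
    hβ.φ (𝔾.d h) a ∈ β.D (𝔾.inv h) := by
  rw [D_inv_eq 𝔾 α β hβ h]
  exact hβ.φ_mem _ (isId_d 𝔾 h) a ha

/-- The value in `T` of a generator datum `(h, a)`: `β_h(φ_{d h}(a))`. -/
def gval (h : G) (a : R) : T := β.act h (hβ.φ (𝔾.d h) a)

lemma gval_mem {e : G} {h : G} {a : R} (hp : 𝔾.r h = e) (ha : a ∈ α.D (𝔾.d h)) :
    gval 𝔾 α β hβ h a ∈ β.D e := by
  have hm := act_mem 𝔾 β (phi_mem_dom 𝔾 α β hβ h ha)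
  rw [D_r_eq 𝔾 α β hβ h, hp] at hm
  exact hm

lemma gval_add (h : G) {a b : R} (ha : a ∈ α.D (𝔾.d h)) (hb : b ∈ α.D (𝔾.d h)) :
    gval 𝔾 α β hβ h (a + b) = gval 𝔾 α β hβ h a + gval 𝔾 α β hβ h b := by
  show β.act h (hβ.φ (𝔾.d h) (a + b)) = β.act h (hβ.φ (𝔾.d h) a) + β.act h (hβ.φ (𝔾.d h) b)
  rw [hβ.φ_add _ (isId_d 𝔾 h) a ha b hb]
  exact β.map_add h _ (phi_mem_dom 𝔾 α β hβ h ha) _ (phi_mem_dom 𝔾 α β hβ h hb)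

lemma gval_zero (h : G) : gval 𝔾 α β hβ h (0 : R) = 0 := by
  show β.act h (hβ.φ (𝔾.d h) 0) = 0
  rw [phi_zero 𝔾 α β hβ (isId_d 𝔾 h), act_zero 𝔾 β h]

lemma gval_neg (h : G) {a : R} (ha : a ∈ α.D (𝔾.d h)) :
    gval 𝔾 α β hβ h (-a) = -gval 𝔾 α β hβ h a := by
  show β.act h (hβ.φ (𝔾.d h) (-a)) = -β.act h (hβ.φ (𝔾.d h) a)
  rw [phi_neg 𝔾 α β hβ (isId_d 𝔾 h) ha]
  exact act_neg 𝔾 β (phi_mem_dom 𝔾 α β hβ h ha)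

lemma gval_sub (h : G) {a b : R} (ha : a ∈ α.D (𝔾.d h)) (hb : b ∈ α.D (𝔾.d h)) :
    gval 𝔾 α β hβ h (a - b) = gval 𝔾 α β hβ h a - gval 𝔾 α β hβ h b := by
  have hab : a - b = a + -b := sub_eq_add_neg a b
  rw [hab, gval_add 𝔾 α β hβ h ha (neg_mem_D 𝔾 α hb), gval_neg 𝔾 α β hβ h hb,
    ← sub_eq_add_neg]

include hβ in
lemma act_act (g h : G) (hc : 𝔾.d g = 𝔾.r h) {x : T} (hx : x ∈ β.D (𝔾.d h)) :
    β.act g (β.act h x) = β.act (𝔾.mul g h) x := by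
  have hx' : x ∈ β.D (𝔾.inv h) := by rw [D_inv_eq 𝔾 α β hβ h]; exact hx
  have h2 : β.act h x ∈ β.D (𝔾.inv g) := by
    have hm := act_mem 𝔾 β hx'
    rw [D_r_eq 𝔾 α β hβ h] at hm
    rw [D_inv_eq 𝔾 α β hβ g, hc]
    exact hm
  exact β.comp_cond g h hc x hx' h2

variable (hu : ∀ g, IsIdentityElem (un g) (α.D g))

include hu in
/-- **Key lemma**: `β_g(φ_{d g}(a)) · φ_{r g}(b) = φ_{r g}(cmap g a b)`. -/
lemma key (g : G) {a b : R} (ha : a ∈ α.D (𝔾.d g)) (hb : b ∈ α.D (𝔾.r g)) :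
    β.act g (hβ.φ (𝔾.d g) a) * hβ.φ (𝔾.r g) b
      = hβ.φ (𝔾.r g) (cmap 𝔾 α un g a b) := by
  have hφa : hβ.φ (𝔾.d g) a ∈ β.D (𝔾.inv g) := phi_mem_dom 𝔾 α β hβ g ha
  have hφbE : hβ.φ (𝔾.r g) b ∈ β.D (𝔾.r g) := hβ.φ_mem _ (isId_r 𝔾 g) b hb
  have hφbDg : hβ.φ (𝔾.r g) b ∈ β.D g := by rw [D_r_eq 𝔾 α β hβ g]; exact hφbE
  have hz : β.act (𝔾.inv g) (hβ.φ (𝔾.r g) b) ∈ β.D (𝔾.inv g) := act_inv_mem 𝔾 β hφbDg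
  have hwmem1 : β.act g (hβ.φ (𝔾.d g) a) * hβ.φ (𝔾.r g) b
      ∈ hβ.φ (𝔾.r g) '' α.D (𝔾.r g) := by
    apply (hβ.φ_ideal (𝔾.r g) (isId_r 𝔾 g)).mul_mem_left
    · have hm := act_mem 𝔾 β hφa
      rwa [D_r_eq 𝔾 α β hβ g] at hm
    · exact ⟨b, hb, rfl⟩
  have hwmem2 : β.act g (hβ.φ (𝔾.d g) a) * hβ.φ (𝔾.r g) b
      ∈ β.act g '' (hβ.φ (𝔾.d g) '' α.D (𝔾.d g)) := by
    refine ⟨hβ.φ (𝔾.d g) a * β.act (𝔾.inv g) (hβ.φ (𝔾.r g) b), ?_, ?_⟩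
    · apply (hβ.φ_ideal (𝔾.d g) (isId_d 𝔾 g)).mul_mem_right ⟨a, ha, rfl⟩
      rw [← D_inv_eq 𝔾 α β hβ g]
      exact hz
    · rw [β.map_mul g _ hφa _ hz, act_act_inv 𝔾 β hφbDg]
  have hw : β.act g (hβ.φ (𝔾.d g) a) * hβ.φ (𝔾.r g) b ∈ hβ.φ (𝔾.r g) '' α.D g := by
    rw [hβ.compat_D g]; exact ⟨hwmem1, hwmem2⟩
  obtain ⟨c₀, hc₀, hc₀eq⟩ := hw
  have hwu : (β.act g (hβ.φ (𝔾.d g) a) * hβ.φ (𝔾.r g) b) * hβ.φ (𝔾.r g) (un g)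
      = β.act g (hβ.φ (𝔾.d g) a) * hβ.φ (𝔾.r g) b := by
    rw [← hc₀eq, ← hβ.φ_mul (𝔾.r g) (isId_r 𝔾 g) c₀ (D_subset 𝔾 α g hc₀) (un g)
      (D_subset 𝔾 α g (hu g).1), ((hu g).2 c₀ hc₀).2]
  have hbu : b * un g ∈ α.D g := (α.ideal g).mul_mem_left hb (hu g).1
  have hbuinv : α.act (𝔾.inv g) (b * un g) ∈ α.D (𝔾.inv g) := act_inv_mem 𝔾 α hbu
  have hminner : α.act (𝔾.inv g) (b * un g) ∈ α.D (𝔾.d g) := D_inv_subset 𝔾 α g hbuinv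
  have hm : a * α.act (𝔾.inv g) (b * un g) ∈ α.D (𝔾.inv g) := by
    apply (α.ideal (𝔾.inv g)).mul_mem_left _ hbuinv
    rw [𝔾.r_inv]; exact ha
  have hchain : hβ.φ (𝔾.r g) (cmap 𝔾 α un g a b)
      = β.act g (hβ.φ (𝔾.d g) a) * hβ.φ (𝔾.r g) b := by
    calc hβ.φ (𝔾.r g) (cmap 𝔾 α un g a b)
        = β.act g (hβ.φ (𝔾.d g) (a * α.act (𝔾.inv g) (b * un g))) :=
          (hβ.compat_act g _ hm).symm
      _ = β.act g (hβ.φ (𝔾.d g) a * hβ.φ (𝔾.d g) (α.act (𝔾.inv g) (b * un g))) := by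
          rw [hβ.φ_mul (𝔾.d g) (isId_d 𝔾 g) a ha _ hminner]
      _ = β.act g (hβ.φ (𝔾.d g) a) * β.act g (hβ.φ (𝔾.d g) (α.act (𝔾.inv g) (b * un g))) :=
          β.map_mul g _ hφa _ (phi_mem_dom 𝔾 α β hβ g hminner)
      _ = β.act g (hβ.φ (𝔾.d g) a) * hβ.φ (𝔾.r g) (α.act g (α.act (𝔾.inv g) (b * un g))) := by
          rw [hβ.compat_act g _ hbuinv]
      _ = β.act g (hβ.φ (𝔾.d g) a) * hβ.φ (𝔾.r g) (b * un g) := by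
          rw [act_act_inv 𝔾 α hbu]
      _ = β.act g (hβ.φ (𝔾.d g) a) * (hβ.φ (𝔾.r g) b * hβ.φ (𝔾.r g) (un g)) := by
          rw [hβ.φ_mul (𝔾.r g) (isId_r 𝔾 g) b hb (un g) (D_subset 𝔾 α g (hu g).1)]
      _ = (β.act g (hβ.φ (𝔾.d g) a) * hβ.φ (𝔾.r g) b) * hβ.φ (𝔾.r g) (un g) :=
          (mul_assoc _ _ _).symm
      _ = β.act g (hβ.φ (𝔾.d g) a) * hβ.φ (𝔾.r g) b := hwu
  exact hchain.symm

/-- Transporting a generator value along the groupoid: `(∗∗)`. -/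
lemma star2 (p₁ q₁ : G) (hpq : 𝔾.r p₁ = 𝔾.r q₁) {cv : R}
    (hcv : cv ∈ α.D (𝔾.mul (𝔾.inv p₁) q₁)) :
    gval 𝔾 α β hβ q₁ (α.act (𝔾.inv (𝔾.mul (𝔾.inv p₁) q₁)) cv)
      = gval 𝔾 α β hβ p₁ cv := by
  have hdk : 𝔾.d (𝔾.mul (𝔾.inv p₁) q₁) = 𝔾.d q₁ := d_mul_inv_mul 𝔾 p₁ q₁ hpq
  have hrk : 𝔾.r (𝔾.mul (𝔾.inv p₁) q₁) = 𝔾.d p₁ := r_mul_inv_mul 𝔾 p₁ q₁ hpq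
  have hdv : α.act (𝔾.inv (𝔾.mul (𝔾.inv p₁) q₁)) cv
      ∈ α.D (𝔾.inv (𝔾.mul (𝔾.inv p₁) q₁)) := act_inv_mem 𝔾 α hcv
  have hca := hβ.compat_act (𝔾.mul (𝔾.inv p₁) q₁) _ hdv
  rw [act_act_inv 𝔾 α hcv] at hca
  have hφdv : hβ.φ (𝔾.d (𝔾.mul (𝔾.inv p₁) q₁)) (α.act (𝔾.inv (𝔾.mul (𝔾.inv p₁) q₁)) cv)
      ∈ β.D (𝔾.d (𝔾.mul (𝔾.inv p₁) q₁)) :=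
    hβ.φ_mem _ (isId_d 𝔾 _) _ (D_inv_subset 𝔾 α _ hdv)
  have haa := act_act 𝔾 α β hβ p₁ (𝔾.mul (𝔾.inv p₁) q₁) hrk.symm hφdv
  rw [mul_inv_mul 𝔾 p₁ q₁ hpq] at haa
  show β.act q₁ (hβ.φ (𝔾.d q₁) (α.act (𝔾.inv (𝔾.mul (𝔾.inv p₁) q₁)) cv))
      = β.act p₁ (hβ.φ (𝔾.d p₁) cv)
  rw [← hdk, ← haa, hca, ← hrk]

include hu in
/-- `(∗)` for a single generator. -/
lemma star1 (p₁ q₁ : G) (hpq : 𝔾.r p₁ = 𝔾.r q₁) {b : R} (hb : b ∈ α.D (𝔾.d q₁)) :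
    β.act (𝔾.inv p₁) (gval 𝔾 α β hβ q₁ b) * hβ.φ (𝔾.d p₁) (un (𝔾.d p₁))
      = hβ.φ (𝔾.d p₁) (cmap 𝔾 α un (𝔾.mul (𝔾.inv p₁) q₁) b (un (𝔾.d p₁))) := by
  have hdk : 𝔾.d (𝔾.mul (𝔾.inv p₁) q₁) = 𝔾.d q₁ := d_mul_inv_mul 𝔾 p₁ q₁ hpq
  have hrk : 𝔾.r (𝔾.mul (𝔾.inv p₁) q₁) = 𝔾.d p₁ := r_mul_inv_mul 𝔾 p₁ q₁ hpq
  have hc : 𝔾.d (𝔾.inv p₁) = 𝔾.r q₁ := comp_inv 𝔾 p₁ q₁ hpq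
  have hφb : hβ.φ (𝔾.d q₁) b ∈ β.D (𝔾.d q₁) := hβ.φ_mem _ (isId_d 𝔾 q₁) b hb
  have h1 : β.act (𝔾.inv p₁) (gval 𝔾 α β hβ q₁ b)
      = β.act (𝔾.mul (𝔾.inv p₁) q₁) (hβ.φ (𝔾.d q₁) b) := by
    show β.act (𝔾.inv p₁) (β.act q₁ (hβ.φ (𝔾.d q₁) b)) = _
    rw [act_act 𝔾 α β hβ (𝔾.inv p₁) q₁ hc hφb]
  have hb' : b ∈ α.D (𝔾.d (𝔾.mul (𝔾.inv p₁) q₁)) := by rw [hdk]; exact hb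
  have hub : un (𝔾.d p₁) ∈ α.D (𝔾.r (𝔾.mul (𝔾.inv p₁) q₁)) := by
    rw [hrk]; exact (hu (𝔾.d p₁)).1
  have hkey := key 𝔾 α un β hβ hu (𝔾.mul (𝔾.inv p₁) q₁) hb' hub
  rw [hdk, hrk] at hkey
  rw [h1, hkey]

/-- The sum in `T` of the values of a list of generator data. -/
def gsum (L : List (G × R)) : T := (L.map (fun p => gval 𝔾 α β hβ p.1 p.2)).sum

lemma gsum_nil : gsum 𝔾 α β hβ ([] : List (G × R)) = 0 := rfl

lemma gsum_cons (p : G × R) (L : List (G × R)) :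
    gsum 𝔾 α β hβ (p :: L) = gval 𝔾 α β hβ p.1 p.2 + gsum 𝔾 α β hβ L := by
  simp [gsum]

lemma gsum_append (L M : List (G × R)) :
    gsum 𝔾 α β hβ (L ++ M) = gsum 𝔾 α β hβ L + gsum 𝔾 α β hβ M := by
  simp [gsum]

lemma gsum_mem {e : G} {L : List (G × R)} (hL : Valid 𝔾 α e L) :
    gsum 𝔾 α β hβ L ∈ β.D e := by
  induction L with
  | nil => rw [gsum_nil]; exact zero_mem_D 𝔾 β e
  | cons p L ih =>
    rw [gsum_cons]
    exact add_mem_D 𝔾 β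
      (gval_mem 𝔾 α β hβ (valid_head 𝔾 α hL).1 (valid_head 𝔾 α hL).2)
      (ih (valid_tail 𝔾 α hL))

lemma gsum_neg {e : G} {L : List (G × R)} (hL : Valid 𝔾 α e L) :
    gsum 𝔾 α β hβ (L.map (fun p => (p.1, -p.2))) = -gsum 𝔾 α β hβ L := by
  induction L with
  | nil => simp [gsum_nil]
  | cons p L ih =>
    simp only [List.map_cons]
    rw [gsum_cons, gsum_cons, ih (valid_tail 𝔾 α hL)]
    dsimp only
    rw [gval_neg 𝔾 α β hβ p.1 (valid_head 𝔾 α hL).2]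
    abel

lemma gval_list_sum (h : G) (l : List R) (hl : ∀ a ∈ l, a ∈ α.D (𝔾.d h)) :
    gval 𝔾 α β hβ h l.sum = (l.map (fun a => gval 𝔾 α β hβ h a)).sum := by
  induction l with
  | nil => simpa using gval_zero 𝔾 α β hβ h
  | cons a l ih =>
    rw [List.sum_cons, List.map_cons, List.sum_cons,
      gval_add 𝔾 α β hβ h (hl a List.mem_cons_self)
        (sum_mem_D 𝔾 α l fun x hx => hl x (List.mem_cons_of_mem a hx)),
      ih fun x hx => hl x (List.mem_cons_of_mem a hx)]

include hu in
/-- `(∗)` for a list. -/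
lemma star (e : G) (p₁ : G) (hp1 : 𝔾.r p₁ = e) (L : List (G × R)) (hL : Valid 𝔾 α e L) :
    β.act (𝔾.inv p₁) (gsum 𝔾 α β hβ L) * hβ.φ (𝔾.d p₁) (un (𝔾.d p₁))
      = hβ.φ (𝔾.d p₁)
          ((L.map (fun q => cmap 𝔾 α un (𝔾.mul (𝔾.inv p₁) q.1) q.2 (un (𝔾.d p₁)))).sum) := by
  induction L with
  | nil =>
    rw [gsum_nil, act_zero 𝔾 β (𝔾.inv p₁), zero_mul, List.map_nil, List.sum_nil,
      phi_zero 𝔾 α β hβ (isId_d 𝔾 p₁)]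
  | cons q L ih =>
    have hq := valid_head 𝔾 α hL
    have hL' := valid_tail 𝔾 α hL
    have hpq : 𝔾.r p₁ = 𝔾.r q.1 := by rw [hp1, hq.1]
    have hgq : gval 𝔾 α β hβ q.1 q.2 ∈ β.D (𝔾.inv (𝔾.inv p₁)) := by
      rw [𝔾.inv_inv, D_r_eq 𝔾 α β hβ p₁, hp1]
      exact gval_mem 𝔾 α β hβ hq.1 hq.2
    have hgL : gsum 𝔾 α β hβ L ∈ β.D (𝔾.inv (𝔾.inv p₁)) := by
      rw [𝔾.inv_inv, D_r_eq 𝔾 α β hβ p₁, hp1]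
      exact gsum_mem 𝔾 α β hβ hL'
    have hcq : cmap 𝔾 α un (𝔾.mul (𝔾.inv p₁) q.1) q.2 (un (𝔾.d p₁)) ∈ α.D (𝔾.d p₁) := by
      exact cmap_list_mem 𝔾 α un hu p₁ hp1 hL _
        (List.mem_map_of_mem List.mem_cons_self)
    have hsmem : (L.map (fun x => cmap 𝔾 α un (𝔾.mul (𝔾.inv p₁) x.1) x.2 (un (𝔾.d p₁)))).sum
        ∈ α.D (𝔾.d p₁) :=
      sum_mem_D 𝔾 α _ (cmap_list_mem 𝔾 α un hu p₁ hp1 hL')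
    rw [gsum_cons, β.map_add (𝔾.inv p₁) _ hgq _ hgL, add_mul,
      star1 𝔾 α un β hβ hu p₁ q.1 hpq hq.2, ih hL', List.map_cons, List.sum_cons,
      hβ.φ_add (𝔾.d p₁) (isId_d 𝔾 p₁) _ hcq _ hsmem]

include hu in
/-- Reduction identity: replacing each entry `(q₁, a)` by `(q₁, a - d_q)` subtracts
a single generator value at `p₁`. -/
lemma red_ident (e : G) (p₁ : G) (hp1 : 𝔾.r p₁ = e) (L : List (G × R))
    (hL : Valid 𝔾 α e L) :
    gsum 𝔾 α β hβ (L.map (fun q => (q.1, q.2 - α.act (𝔾.inv (𝔾.mul (𝔾.inv p₁) q.1))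
        (cmap 𝔾 α un (𝔾.mul (𝔾.inv p₁) q.1) q.2 (un (𝔾.d p₁))))))
      = gsum 𝔾 α β hβ L - gval 𝔾 α β hβ p₁
          ((L.map (fun q => cmap 𝔾 α un (𝔾.mul (𝔾.inv p₁) q.1) q.2 (un (𝔾.d p₁)))).sum) := by
  induction L with
  | nil =>
    simp only [List.map_nil, List.sum_nil]
    rw [gsum_nil, gval_zero 𝔾 α β hβ p₁, sub_zero]
  | cons q L ih =>
    have hq := valid_head 𝔾 α hL
    have hL' := valid_tail 𝔾 α hL
    have hpq : 𝔾.r p₁ = 𝔾.r q.1 := by rw [hp1, hq.1]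
    have hq2' : q.2 ∈ α.D (𝔾.d (𝔾.mul (𝔾.inv p₁) q.1)) := by
      rw [d_mul_inv_mul 𝔾 p₁ q.1 hpq]; exact hq.2
    have hu2' : un (𝔾.d p₁) ∈ α.D (𝔾.r (𝔾.mul (𝔾.inv p₁) q.1)) := by
      rw [r_mul_inv_mul 𝔾 p₁ q.1 hpq]; exact (hu (𝔾.d p₁)).1
    have hcq : cmap 𝔾 α un (𝔾.mul (𝔾.inv p₁) q.1) q.2 (un (𝔾.d p₁))
        ∈ α.D (𝔾.mul (𝔾.inv p₁) q.1) := cmap_mem 𝔾 α un hu hq2' hu2'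
    have hcqd : cmap 𝔾 α un (𝔾.mul (𝔾.inv p₁) q.1) q.2 (un (𝔾.d p₁)) ∈ α.D (𝔾.d p₁) := by
      have h3 := D_subset 𝔾 α _ hcq
      rwa [r_mul_inv_mul 𝔾 p₁ q.1 hpq] at h3
    have hdq : α.act (𝔾.inv (𝔾.mul (𝔾.inv p₁) q.1))
        (cmap 𝔾 α un (𝔾.mul (𝔾.inv p₁) q.1) q.2 (un (𝔾.d p₁))) ∈ α.D (𝔾.d q.1) := by
      have h3 := D_inv_subset 𝔾 α _ (act_inv_mem 𝔾 α hcq)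
      rwa [d_mul_inv_mul 𝔾 p₁ q.1 hpq] at h3
    have hsmem : (L.map (fun x => cmap 𝔾 α un (𝔾.mul (𝔾.inv p₁) x.1) x.2 (un (𝔾.d p₁)))).sum
        ∈ α.D (𝔾.d p₁) :=
      sum_mem_D 𝔾 α _ (cmap_list_mem 𝔾 α un hu p₁ hp1 hL')
    simp only [List.map_cons, List.sum_cons]
    rw [gsum_cons, gsum_cons, ih hL']
    dsimp only
    rw [gval_sub 𝔾 α β hβ q.1 hq.2 hdq, star2 𝔾 α β hβ p₁ q.1 hpq hcq,
      gval_add 𝔾 α β hβ p₁ hcqd hsmem]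
    abel

include hu in
/-- Product of two generator values is again a generator value. -/
lemma gval_mul (p₁ q₁ : G) (hpq : 𝔾.r p₁ = 𝔾.r q₁) {a b : R}
    (ha : a ∈ α.D (𝔾.d p₁)) (hb : b ∈ α.D (𝔾.d q₁)) :
    gval 𝔾 α β hβ p₁ a * gval 𝔾 α β hβ q₁ b
      = gval 𝔾 α β hβ q₁ (cmap 𝔾 α un (𝔾.mul (𝔾.inv q₁) p₁) a b) := by
  have hqp : 𝔾.r q₁ = 𝔾.r p₁ := hpq.symm
  have hdk : 𝔾.d (𝔾.mul (𝔾.inv q₁) p₁) = 𝔾.d p₁ := d_mul_inv_mul 𝔾 q₁ p₁ hqp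
  have hrk : 𝔾.r (𝔾.mul (𝔾.inv q₁) p₁) = 𝔾.d q₁ := r_mul_inv_mul 𝔾 q₁ p₁ hqp
  have hφa : hβ.φ (𝔾.d p₁) a ∈ β.D (𝔾.d (𝔾.mul (𝔾.inv q₁) p₁)) := by
    rw [hdk]; exact hβ.φ_mem _ (isId_d 𝔾 p₁) a ha
  have h1 : β.act q₁ (β.act (𝔾.mul (𝔾.inv q₁) p₁) (hβ.φ (𝔾.d p₁) a))
      = β.act p₁ (hβ.φ (𝔾.d p₁) a) := by
    rw [act_act 𝔾 α β hβ q₁ (𝔾.mul (𝔾.inv q₁) p₁) hrk.symm hφa,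
      mul_inv_mul 𝔾 q₁ p₁ hqp]
  have hakm : β.act (𝔾.mul (𝔾.inv q₁) p₁) (hβ.φ (𝔾.d p₁) a) ∈ β.D (𝔾.inv q₁) := by
    have hin : hβ.φ (𝔾.d p₁) a ∈ β.D (𝔾.inv (𝔾.mul (𝔾.inv q₁) p₁)) := by
      rw [D_inv_eq 𝔾 α β hβ (𝔾.mul (𝔾.inv q₁) p₁)]; exact hφa
    have h2 := act_mem 𝔾 β hin
    rw [D_r_eq 𝔾 α β hβ (𝔾.mul (𝔾.inv q₁) p₁), hrk, ← D_inv_eq 𝔾 α β hβ q₁] at h2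
    exact h2
  have hφb : hβ.φ (𝔾.d q₁) b ∈ β.D (𝔾.inv q₁) := phi_mem_dom 𝔾 α β hβ q₁ hb
  have ha' : a ∈ α.D (𝔾.d (𝔾.mul (𝔾.inv q₁) p₁)) := by rw [hdk]; exact ha
  have hb' : b ∈ α.D (𝔾.r (𝔾.mul (𝔾.inv q₁) p₁)) := by rw [hrk]; exact hb
  have hkey := key 𝔾 α un β hβ hu (𝔾.mul (𝔾.inv q₁) p₁) ha' hb'
  rw [hdk, hrk] at hkey
  show β.act p₁ (hβ.φ (𝔾.d p₁) a) * β.act q₁ (hβ.φ (𝔾.d q₁) b)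
      = β.act q₁ (hβ.φ (𝔾.d q₁) (cmap 𝔾 α un (𝔾.mul (𝔾.inv q₁) p₁) a b))
  rw [← h1, ← β.map_mul q₁ _ hakm _ hφb, hkey]

include hu in
lemma gval_gsum_mul (e : G) (p₁ : G) (hp1 : 𝔾.r p₁ = e) {a : R} (ha : a ∈ α.D (𝔾.d p₁))
    (M : List (G × R)) (hM : Valid 𝔾 α e M) :
    gval 𝔾 α β hβ p₁ a * gsum 𝔾 α β hβ M
      = gsum 𝔾 α β hβ (M.map (fun q => (q.1, cmap 𝔾 α un (𝔾.mul (𝔾.inv q.1) p₁) a q.2))) := by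
  induction M with
  | nil => simp [gsum_nil]
  | cons q M ih =>
    have hq := valid_head 𝔾 α hM
    have hM' := valid_tail 𝔾 α hM
    simp only [List.map_cons]
    rw [gsum_cons, gsum_cons, mul_add, ih hM']
    dsimp only
    rw [gval_mul 𝔾 α un β hβ hu p₁ q.1 (by rw [hp1, hq.1]) ha hq.2]


include hu in
lemma gsum_mul (e : G) (L M : List (G × R)) (hL : Valid 𝔾 α e L) (hM : Valid 𝔾 α e M) :
    gsum 𝔾 α β hβ L * gsum 𝔾 α β hβ M
      = gsum 𝔾 α β hβ (L.flatMap (fun p => M.map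
          (fun q => (q.1, cmap 𝔾 α un (𝔾.mul (𝔾.inv q.1) p.1) p.2 q.2)))) := by
  induction L with
  | nil => simp [gsum_nil]
  | cons p L ih =>
    have hp := valid_head 𝔾 α hL
    have hL' := valid_tail 𝔾 α hL
    rw [List.flatMap_cons, gsum_append, gsum_cons, add_mul, ih hL',
      gval_gsum_mul 𝔾 α un β hβ hu e p.1 hp.1 hp.2 M hM]

/-- Action on a generator sum. -/
lemma act_gsum (g : G) (L : List (G × R)) (hL : Valid 𝔾 α (𝔾.d g) L) :
    β.act g (gsum 𝔾 α β hβ L) = gsum 𝔾 α β hβ (L.map (fun q => (𝔾.mul g q.1, q.2))) := by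
  induction L with
  | nil => rw [gsum_nil, act_zero 𝔾 β g, List.map_nil, gsum_nil]
  | cons q L ih =>
    have hq := valid_head 𝔾 α hL
    have hL' := valid_tail 𝔾 α hL
    have hcg : 𝔾.d g = 𝔾.r q.1 := hq.1.symm
    have hmem1 : gval 𝔾 α β hβ q.1 q.2 ∈ β.D (𝔾.inv g) := by
      rw [D_inv_eq 𝔾 α β hβ g]
      exact gval_mem 𝔾 α β hβ hq.1 hq.2
    have hmem2 : gsum 𝔾 α β hβ L ∈ β.D (𝔾.inv g) := by
      rw [D_inv_eq 𝔾 α β hβ g]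
      exact gsum_mem 𝔾 α β hβ hL'
    simp only [List.map_cons]
    rw [gsum_cons, β.map_add g _ hmem1 _ hmem2, ih hL', gsum_cons]
    dsimp only
    congr 1
    show β.act g (β.act q.1 (hβ.φ (𝔾.d q.1) q.2))
        = β.act (𝔾.mul g q.1) (hβ.φ (𝔾.d (𝔾.mul g q.1)) q.2)
    rw [act_act 𝔾 α β hβ g q.1 hcg (hβ.φ_mem _ (isId_d 𝔾 q.1) q.2 hq.2),
      𝔾.d_mul g q.1 hcg]

lemma valid_act (g : G) {L : List (G × R)} (hL : Valid 𝔾 α (𝔾.d g) L) :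
    Valid 𝔾 α (𝔾.r g) (L.map (fun q => (𝔾.mul g q.1, q.2))) := by
  intro x hx
  obtain ⟨q, hq, rfl⟩ := List.mem_map.mp hx
  have hqv := hL q hq
  have hcg : 𝔾.d g = 𝔾.r q.1 := hqv.1.symm
  refine ⟨?_, ?_⟩
  · exact 𝔾.r_mul' g q.1 hcg
  · show q.2 ∈ α.D (𝔾.d (𝔾.mul g q.1))
    rw [𝔾.d_mul g q.1 hcg]; exact hqv.2

/-- Every element of `E_e` is a generator sum. -/
lemma rep (e : G) (he : 𝔾.isId e) {x : T} (hx : x ∈ β.D e) :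
    ∃ L : List (G × R), Valid 𝔾 α e L ∧ gsum 𝔾 α β hβ L = x := by
  have hsp := hβ.spans e
  rw [r_of_isId 𝔾 he] at hsp
  rw [hsp] at hx
  refine AddSubgroup.closure_induction
    (p := fun y _ => ∃ L : List (G × R), Valid 𝔾 α e L ∧ gsum 𝔾 α β hβ L = y)
    ?_ ?_ ?_ ?_ hx
  · intro y hy
    simp only [Set.mem_iUnion, Set.mem_setOf_eq, exists_prop] at hy
    obtain ⟨h, hh, z, ⟨a, ha, rfl⟩, rfl⟩ := hy
    refine ⟨[(h, a)], ?_, ?_⟩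
    · intro p hp
      have hp' : p = (h, a) := by simpa using hp
      subst hp'
      exact ⟨hh, ha⟩
    · simp [gsum, gval]
  · exact ⟨[], fun p hp => absurd hp List.not_mem_nil, rfl⟩
  · rintro y z - - ⟨Ly, hLy, rfl⟩ ⟨Lz, hLz, rfl⟩
    exact ⟨Ly ++ Lz, valid_append 𝔾 α hLy hLz, by rw [gsum_append]⟩
  · rintro y - ⟨L, hLv, rfl⟩
    exact ⟨L.map (fun p => (p.1, -p.2)), valid_neg 𝔾 α hLv, gsum_neg 𝔾 α β hβ hLv⟩

end Glob

/-! #### Two globalizations: well-definedness and the comparison map -/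

section Two
variable (𝔾 : AlgGroupoid G) {R : Type u} [NonUnitalRing R]
variable (α : PartialGroupoidAction 𝔾 R (Set.univ : Set R))
variable (un : G → R)
variable {T : Type u} [NonUnitalRing T]
variable (β : PartialGroupoidAction 𝔾 T (Set.univ : Set T)) (hβ : Globalization 𝔾 α β)
variable {T' : Type u} [NonUnitalRing T']
variable (γ : PartialGroupoidAction 𝔾 T' (Set.univ : Set T')) (hγ : Globalization 𝔾 α γ)
variable (hu : ∀ g, IsIdentityElem (un g) (α.D g))

include hu in
/-- Well-definedness: a generator list summing to zero in one globalization sums to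
zero in the other. -/
lemma wd (e : G) (n : ℕ) : ∀ L : List (G × R), L.length ≤ n → Valid 𝔾 α e L →
    gsum 𝔾 α γ hγ L = 0 → gsum 𝔾 α β hβ L = 0 := by
  induction n with
  | zero =>
    intro L hlen _ _
    rw [List.eq_nil_of_length_eq_zero (Nat.le_zero.mp hlen), gsum_nil]
  | succ n ih =>
    intro L hlen hL hz
    cases L with
    | nil => rw [gsum_nil]
    | cons p L₀ =>
      have hp := valid_head 𝔾 α hL
      have hL₀ := valid_tail 𝔾 α hL
      -- extract the relation in R from the γ-world
      have hstar := star 𝔾 α un γ hγ hu e p.1 hp.1 (p :: L₀) hL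
      rw [hz, act_zero 𝔾 γ (𝔾.inv p.1), zero_mul] at hstar
      have hmemsum : (((p :: L₀).map
          (fun q => cmap 𝔾 α un (𝔾.mul (𝔾.inv p.1) q.1) q.2 (un (𝔾.d p.1)))).sum)
          ∈ α.D (𝔾.d p.1) :=
        sum_mem_D 𝔾 α _ (cmap_list_mem 𝔾 α un hu p.1 hp.1 hL)
      have hrel := phi_eq_zero 𝔾 α γ hγ (isId_d 𝔾 p.1) hmemsum hstar.symm
      rw [List.map_cons, List.sum_cons, cmap_head 𝔾 α un hu hp.2] at hrel
      have hsum : (L₀.map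
          (fun q => cmap 𝔾 α un (𝔾.mul (𝔾.inv p.1) q.1) q.2 (un (𝔾.d p.1)))).sum
          = -p.2 := eq_neg_of_add_eq_zero_right hrel
      -- validity and length of the reduced list
      have hL₁ : Valid 𝔾 α e (L₀.map (fun q => (q.1,
          q.2 - α.act (𝔾.inv (𝔾.mul (𝔾.inv p.1) q.1))
            (cmap 𝔾 α un (𝔾.mul (𝔾.inv p.1) q.1) q.2 (un (𝔾.d p.1)))))) := by
        intro x hx
        obtain ⟨q, hqL, rfl⟩ := List.mem_map.mp hx
        have hq' := hL₀ q hqL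
        have hpq : 𝔾.r p.1 = 𝔾.r q.1 := by rw [hp.1, hq'.1]
        refine ⟨hq'.1, ?_⟩
        show q.2 - _ ∈ α.D (𝔾.d q.1)
        apply sub_mem_D 𝔾 α hq'.2
        have hc1 : q.2 ∈ α.D (𝔾.d (𝔾.mul (𝔾.inv p.1) q.1)) := by
          rw [d_mul_inv_mul 𝔾 p.1 q.1 hpq]; exact hq'.2
        have hc2 : un (𝔾.d p.1) ∈ α.D (𝔾.r (𝔾.mul (𝔾.inv p.1) q.1)) := by
          rw [r_mul_inv_mul 𝔾 p.1 q.1 hpq]; exact (hu _).1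
        have h3 := D_inv_subset 𝔾 α _ (act_inv_mem 𝔾 α (cmap_mem 𝔾 α un hu hc1 hc2))
        rwa [d_mul_inv_mul 𝔾 p.1 q.1 hpq] at h3
      have hlen₁ : (L₀.map (fun q => (q.1,
          q.2 - α.act (𝔾.inv (𝔾.mul (𝔾.inv p.1) q.1))
            (cmap 𝔾 α un (𝔾.mul (𝔾.inv p.1) q.1) q.2 (un (𝔾.d p.1)))))).length ≤ n := by
        rw [List.length_map]
        have hlen' : L₀.length + 1 ≤ n + 1 := by simpa using hlen
        exact Nat.succ_le_succ_iff.mp hlen'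
      -- the reduced list sums to 0 in the γ-world
      have hγred := red_ident 𝔾 α un γ hγ hu e p.1 hp.1 L₀ hL₀
      rw [hsum, gval_neg 𝔾 α γ hγ p.1 hp.2, sub_neg_eq_add] at hγred
      rw [gsum_cons] at hz
      have hγ0 : gsum 𝔾 α γ hγ (L₀.map (fun q => (q.1,
          q.2 - α.act (𝔾.inv (𝔾.mul (𝔾.inv p.1) q.1))
            (cmap 𝔾 α un (𝔾.mul (𝔾.inv p.1) q.1) q.2 (un (𝔾.d p.1)))))) = 0 := by
        rw [hγred, add_comm]
        exact hz
      have hβ0 := ih _ hlen₁ hL₁ hγ0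
      have hβred := red_ident 𝔾 α un β hβ hu e p.1 hp.1 L₀ hL₀
      rw [hsum, gval_neg 𝔾 α β hβ p.1 hp.2, sub_neg_eq_add] at hβred
      rw [gsum_cons, add_comm, ← hβred]
      exact hβ0

open Classical in
/-- The comparison map `ψ_e : E'_e → E_e` (on representable elements). -/
noncomputable def psi (e : G) (x : T') : T :=
  if h : ∃ L : List (G × R), Valid 𝔾 α e L ∧ gsum 𝔾 α γ hγ L = x then
    gsum 𝔾 α β hβ h.choose else 0

include hu in
lemma psi_spec (e : G) (L : List (G × R)) (hL : Valid 𝔾 α e L) :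
    psi 𝔾 α β hβ γ hγ e (gsum 𝔾 α γ hγ L) = gsum 𝔾 α β hβ L := by
  have hex : ∃ M : List (G × R), Valid 𝔾 α e M ∧ gsum 𝔾 α γ hγ M = gsum 𝔾 α γ hγ L :=
    ⟨L, hL, rfl⟩
  rw [psi, dif_pos hex]
  obtain ⟨hMv, hMs⟩ := hex.choose_spec
  have h0 : gsum 𝔾 α γ hγ (hex.choose ++ L.map (fun p => (p.1, -p.2))) = 0 := by
    rw [gsum_append, gsum_neg 𝔾 α γ hγ hL, hMs]
    abel
  have hv : Valid 𝔾 α e (hex.choose ++ L.map (fun p => (p.1, -p.2))) :=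
    valid_append 𝔾 α hMv (valid_neg 𝔾 α hL)
  have h1 := wd 𝔾 α un β hβ γ hγ hu e
    (hex.choose ++ L.map (fun p => (p.1, -p.2))).length
    (hex.choose ++ L.map (fun p => (p.1, -p.2))) le_rfl hv h0
  rw [gsum_append, gsum_neg 𝔾 α β hβ hL] at h1
  exact add_neg_eq_zero.mp h1

end Two

end GU

/-- **Theorem 2.1 (uniqueness)**: if every ideal `D_g` of a partial action `α`
is unital, then a globalization of `α` is unique up to equivalence: for any
two globalizations `(T, β, φ)` and `(T', β', φ')` there is, for each identity
`e ∈ G₀`, a ring isomorphism `ψ_e : E'_e → E_e` with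
`β_g(ψ_{d(g)}(a)) = ψ_{r(g)}(β'_g(a))` for all `g ∈ G`, `a ∈ E'_{d(g)}`. -/
theorem globalization_unique {G : Type u} [Nonempty G] (𝔾 : AlgGroupoid G)
    {R : Type u} [NonUnitalRing R] (α : PartialGroupoidAction 𝔾 R (Set.univ : Set R))
    (hD : ∀ g : G, ∃ u, IsIdentityElem u (α.D g))
    {T : Type u} [NonUnitalRing T] (β : PartialGroupoidAction 𝔾 T (Set.univ : Set T))
    {T' : Type u} [NonUnitalRing T'] (β' : PartialGroupoidAction 𝔾 T' (Set.univ : Set T'))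
    (hβ : Globalization 𝔾 α β) (hβ' : Globalization 𝔾 α β') :
    ∃ ψ : G → T' → T,
      (∀ e, 𝔾.isId e →
        Set.BijOn (ψ e) (β'.D e) (β.D e) ∧
        (∀ x ∈ β'.D e, ∀ y ∈ β'.D e,
          ψ e (x + y) = ψ e x + ψ e y ∧ ψ e (x * y) = ψ e x * ψ e y)) ∧
      (∀ g : G, ∀ a ∈ β'.D (𝔾.d g),
        β.act g (ψ (𝔾.d g) a) = ψ (𝔾.r g) (β'.act g a)) := by
    classical
  choose un hun using hD
  refine ⟨GU.psi 𝔾 α β hβ β' hβ', ?_, ?_⟩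
  · intro e he
    refine ⟨⟨?_, ?_, ?_⟩, ?_⟩
    · -- maps to
      intro x hx
      obtain ⟨L, hLv, hLs⟩ := GU.rep 𝔾 α β' hβ' e he hx
      rw [← hLs, GU.psi_spec 𝔾 α un β hβ β' hβ' hun e L hLv]
      exact GU.gsum_mem 𝔾 α β hβ hLv
    · -- injective
      intro x hx y hy hxy
      obtain ⟨Lx, hLxv, hLxs⟩ := GU.rep 𝔾 α β' hβ' e he hx
      obtain ⟨Ly, hLyv, hLys⟩ := GU.rep 𝔾 α β' hβ' e he hy
      rw [← hLxs, ← hLys, GU.psi_spec 𝔾 α un β hβ β' hβ' hun e Lx hLxv,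
        GU.psi_spec 𝔾 α un β hβ β' hβ' hun e Ly hLyv] at hxy
      have h0 : GU.gsum 𝔾 α β hβ (Lx ++ Ly.map (fun p => (p.1, -p.2))) = 0 := by
        rw [GU.gsum_append, GU.gsum_neg 𝔾 α β hβ hLyv, hxy]
        abel
      have hv := GU.valid_append 𝔾 α hLxv (GU.valid_neg 𝔾 α hLyv)
      have h1 := GU.wd 𝔾 α un β' hβ' β hβ hun e
        (Lx ++ Ly.map (fun p => (p.1, -p.2))).length
        (Lx ++ Ly.map (fun p => (p.1, -p.2))) le_rfl hv h0
      rw [GU.gsum_append, GU.gsum_neg 𝔾 α β' hβ' hLyv] at h1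
      rw [← hLxs, ← hLys]
      exact add_neg_eq_zero.mp h1
    · -- surjective
      intro y hy
      obtain ⟨L, hLv, hLs⟩ := GU.rep 𝔾 α β hβ e he hy
      refine ⟨GU.gsum 𝔾 α β' hβ' L, GU.gsum_mem 𝔾 α β' hβ' hLv, ?_⟩
      rw [GU.psi_spec 𝔾 α un β hβ β' hβ' hun e L hLv]
      exact hLs
    · -- additive and multiplicative
      intro x hx y hy
      obtain ⟨Lx, hLxv, hLxs⟩ := GU.rep 𝔾 α β' hβ' e he hx
      obtain ⟨Ly, hLyv, hLys⟩ := GU.rep 𝔾 α β' hβ' e he hy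
      constructor
      · rw [← hLxs, ← hLys, ← GU.gsum_append 𝔾 α β' hβ' Lx Ly,
          GU.psi_spec 𝔾 α un β hβ β' hβ' hun e _ (GU.valid_append 𝔾 α hLxv hLyv),
          GU.psi_spec 𝔾 α un β hβ β' hβ' hun e Lx hLxv,
          GU.psi_spec 𝔾 α un β hβ β' hβ' hun e Ly hLyv,
          GU.gsum_append 𝔾 α β hβ Lx Ly]
      · rw [← hLxs, ← hLys,
          GU.gsum_mul 𝔾 α un β' hβ' hun e Lx Ly hLxv hLyv,
          GU.psi_spec 𝔾 α un β hβ β' hβ' hun e _ (GU.valid_prod 𝔾 α un hun hLxv hLyv),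
          GU.psi_spec 𝔾 α un β hβ β' hβ' hun e Lx hLxv,
          GU.psi_spec 𝔾 α un β hβ β' hβ' hun e Ly hLyv,
          GU.gsum_mul 𝔾 α un β hβ hun e Lx Ly hLxv hLyv]
  · -- equivariance
    intro g a ha
    obtain ⟨L, hLv, hLs⟩ := GU.rep 𝔾 α β' hβ' (𝔾.d g) (GU.isId_d 𝔾 g) ha
    rw [← hLs, GU.psi_spec 𝔾 α un β hβ β' hβ' hun _ L hLv,
      GU.act_gsum 𝔾 α β' hβ' g L hLv,
      GU.psi_spec 𝔾 α un β hβ β' hβ' hun _ _ (GU.valid_act 𝔾 α g hLv),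
      ← GU.act_gsum 𝔾 α β hβ g L hLv]
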